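/- Let ω ∈ ℝ^n satisfy ω·s ≠ 0 for all nonzero s ∈ ℤ^n, and let f : T^n → ℝ be continuous. Then (1/T) ∫₀^T f(x₀ + ωt) dt converges as T → ∞ to ∫_{T^n} f dμ, uniformly in x₀ ∈ T^n. -/

import Mathlib

open MeasureTheory Filter

instance : IsProbabilityMeasure (volume : Measure (AddCircle (1:ℝ))) :=
  ⟨by rw [AddCircle.measure_univ]; norm_num⟩

noncomputable section WeylAux

open Complex Submodule Set


def tchar {n : ℕ} (s : Fin n → ℤ) : C((Fin n → AddCircle (1:ℝ)), ℂ) :=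
  ⟨fun x => ∏ i, (fourier (s i) (x i) : ℂ), by fun_prop⟩

lemma tchar_apply {n : ℕ} (s : Fin n → ℤ) (x : Fin n → AddCircle (1:ℝ)) :
    tchar s x = ∏ i, (fourier (s i) (x i) : ℂ) := rfl

lemma tchar_zero {n : ℕ} : (tchar (0 : Fin n → ℤ)) = 1 := by
  ext x; simp [tchar_apply, fourier_zero]

lemma tchar_mul {n : ℕ} (s t : Fin n → ℤ) : tchar s * tchar t = tchar (s + t) := by
  ext x
  simp only [ContinuousMap.mul_apply, tchar_apply, ← Finset.prod_mul_distrib]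
  refine Finset.prod_congr rfl fun i _ => ?_
  rw [Pi.add_apply, fourier_add]

lemma tchar_conj {n : ℕ} (s : Fin n → ℤ) :
    (starRingEnd ℂ) ∘ (tchar s) = tchar (-s) := by
  funext x
  simp only [Function.comp_apply, tchar_apply, map_prod]
  exact Finset.prod_congr rfl fun i _ => by
    rw [Pi.neg_apply, ← fourier_neg]

/-- The star subalgebra generated by characters. -/
def tSubalgebra (n : ℕ) : StarSubalgebra ℂ C((Fin n → AddCircle (1:ℝ)), ℂ) where
  toSubalgebra := Algebra.adjoin ℂ (range (tchar (n := n)))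
  star_mem' := by
    show Algebra.adjoin ℂ (range (tchar (n := n))) ≤
      star (Algebra.adjoin ℂ (range (tchar (n := n))))
    refine Algebra.adjoin_le ?_
    rintro - ⟨s, rfl⟩
    refine Algebra.subset_adjoin ⟨-s, ?_⟩
    ext1 x
    exact congrFun (tchar_conj s).symm x

lemma tSubalgebra_coe {n : ℕ} :
    Subalgebra.toSubmodule (tSubalgebra n).toSubalgebra = span ℂ (range (tchar (n := n))) := by
  apply Algebra.adjoin_eq_span_of_subset
  refine Subset.trans ?_ Submodule.subset_span
  intro x hx
  refine Submonoid.closure_induction (fun _ => id) ⟨0, tchar_zero⟩ ?_ hx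
  rintro - - - - ⟨s, rfl⟩ ⟨t, rfl⟩
  exact ⟨s + t, (tchar_mul s t).symm⟩

lemma tSubalgebra_separatesPoints (n : ℕ) : (tSubalgebra n).SeparatesPoints := by
  intro x y hxy
  obtain ⟨i, hi⟩ : ∃ i, x i ≠ y i := by
    by_contra h; push_neg at h; exact hxy (funext h)
  refine ⟨_, ⟨tchar (Pi.single i 1), Algebra.subset_adjoin ⟨Pi.single i 1, rfl⟩, rfl⟩, ?_⟩
  have key : ∀ z : Fin n → AddCircle (1:ℝ), tchar (Pi.single i 1) z = fourier 1 (z i) := by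
    intro z
    rw [tchar_apply, Finset.prod_eq_single i
      (fun j _ hj => by rw [Pi.single_eq_of_ne hj]; simp [fourier_zero])
      (fun h => absurd (Finset.mem_univ i) h)]
    rw [Pi.single_eq_same]
  dsimp only
  rw [key, key, fourier_one, fourier_one]
  intro h
  rw [Circle.coe_inj] at h
  exact hi (AddCircle.injective_toCircle one_ne_zero h)

lemma span_tchar_closure_eq_top (n : ℕ) :
    (span ℂ (range (tchar (n := n)))).topologicalClosure = ⊤ := by
  rw [← tSubalgebra_coe]
  exact congr_arg (Subalgebra.toSubmodule <| StarSubalgebra.toSubalgebra ·)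
    (ContinuousMap.starSubalgebra_topologicalClosure_eq_top_of_separatesPoints _
      (tSubalgebra_separatesPoints n))

lemma integral_fourier_eq_zero {k : ℤ} (hk : k ≠ 0) :
    ∫ x : AddCircle (1:ℝ), (fourier k x : ℂ) = 0 := by
  apply integral_eq_zero_of_add_right_eq_neg (g := ((1/2/k : ℝ) : AddCircle (1:ℝ)))
  intro x
  have h2 : ((fourier k) (x + (((1:ℝ)/2/k : ℝ) : AddCircle (1:ℝ))) : ℂ) = -((fourier k) x : ℂ) := by
    exact_mod_cast fourier_add_half_inv_index hk one_pos x
  exact h2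

lemma integral_tchar_eq_zero {n : ℕ} {s : Fin n → ℤ} (hs : s ≠ 0) :
    ∫ x : Fin n → AddCircle (1:ℝ), tchar s x = 0 := by
  simp_rw [tchar_apply]
  rw [integral_fintype_prod_volume_eq_prod (f := fun i (y : AddCircle (1:ℝ)) => (fourier (s i) y : ℂ))]
  obtain ⟨i, hi⟩ : ∃ i, s i ≠ 0 := by
    by_contra h; push_neg at h; exact hs (funext h)
  exact Finset.prod_eq_zero (Finset.mem_univ i) (integral_fourier_eq_zero hi)

lemma fourier_addcirc_add {k : ℤ} (x y : AddCircle (1:ℝ)) :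
    (fourier k (x + y) : ℂ) = fourier k x * fourier k y := by
  rw [fourier_apply, fourier_apply, fourier_apply, zsmul_add, AddCircle.toCircle_add]
  simp

lemma tchar_flow {n : ℕ} (s : Fin n → ℤ) (ω : Fin n → ℝ) (x₀ : Fin n → AddCircle (1:ℝ)) (t : ℝ) :
    tchar s (fun i => x₀ i + ((ω i * t : ℝ) : AddCircle (1:ℝ)))
      = tchar s x₀ * Complex.exp ((2 * Real.pi * I * (∑ i, (s i : ℝ) * ω i)) * t) := by
  simp_rw [tchar_apply, fourier_addcirc_add, Finset.prod_mul_distrib]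
  congr 1
  simp_rw [fourier_coe_apply]
  rw [← Complex.exp_sum]
  congr 1
  push_cast
  rw [Finset.mul_sum, Finset.sum_mul]
  refine Finset.sum_congr rfl fun i _ => by ring

lemma tendstoUniformly_const' {α β ι : Type*} [UniformSpace β] {f : α → β} {p : Filter ι} :
    TendstoUniformly (fun _ => f) f p := fun u hu =>
  Filter.Eventually.of_forall fun _ => fun x => refl_mem_uniformity hu

variable {n : ℕ}

def flow (ω : Fin n → ℝ) (x₀ : Fin n → AddCircle (1:ℝ)) (t : ℝ) : Fin n → AddCircle (1:ℝ) :=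
  fun i => x₀ i + ((ω i * t : ℝ) : AddCircle (1:ℝ))

lemma continuous_flow (ω : Fin n → ℝ) (x₀ : Fin n → AddCircle (1:ℝ)) :
    Continuous (flow ω x₀) := by
  refine continuous_pi fun i => continuous_const.add ?_
  exact (AddCircle.continuous_mk' _).comp (continuous_const.mul continuous_id)

/-- Time-averages of `g` along the flow converge uniformly to the space average. -/
def UnifAvg (ω : Fin n → ℝ) (g : C((Fin n → AddCircle (1:ℝ)), ℂ)) : Prop :=
  TendstoUniformly
    (fun (T : ℝ) x₀ => (1 / T : ℂ) * ∫ t in (0:ℝ)..T, g (flow ω x₀ t))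
    (fun _ => ∫ x, g x) atTop

lemma cmap_integrable (g : C((Fin n → AddCircle (1:ℝ)), ℂ)) :
    Integrable g (volume : Measure (Fin n → AddCircle (1:ℝ))) :=
  g.continuous.integrable_of_hasCompactSupport (HasCompactSupport.of_compactSpace _)

lemma cmap_intervalIntegrable (ω : Fin n → ℝ) (g : C((Fin n → AddCircle (1:ℝ)), ℂ))
    (x₀ : Fin n → AddCircle (1:ℝ)) (T : ℝ) :
    IntervalIntegrable (fun t => g (flow ω x₀ t)) volume 0 T :=
  (g.continuous.comp (continuous_flow ω x₀)).intervalIntegrable 0 T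

lemma unifAvg_zero (ω : Fin n → ℝ) : UnifAvg ω 0 := by
  have h1 : (fun (T : ℝ) (x₀ : Fin n → AddCircle (1:ℝ)) =>
      (1 / T : ℂ) * ∫ t in (0:ℝ)..T, (0 : C((Fin n → AddCircle (1:ℝ)), ℂ)) (flow ω x₀ t)) =
      fun _ _ => 0 := by
    funext T x₀; simp
  unfold UnifAvg
  rw [h1]
  have h2 : (∫ x, (0 : C((Fin n → AddCircle (1:ℝ)), ℂ)) x) = 0 := by simp
  simp only [h2]
  exact tendstoUniformly_const'

lemma unifAvg_add (ω : Fin n → ℝ) {g h : C((Fin n → AddCircle (1:ℝ)), ℂ)}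
    (hg : UnifAvg ω g) (hh : UnifAvg ω h) : UnifAvg ω (g + h) := by
  unfold UnifAvg at *
  have h1 : (fun (T : ℝ) (x₀ : Fin n → AddCircle (1:ℝ)) =>
      (1 / T : ℂ) * ∫ t in (0:ℝ)..T, (g + h) (flow ω x₀ t)) =
      (fun (T : ℝ) x₀ => (1 / T : ℂ) * ∫ t in (0:ℝ)..T, g (flow ω x₀ t)) +
      (fun (T : ℝ) x₀ => (1 / T : ℂ) * ∫ t in (0:ℝ)..T, h (flow ω x₀ t)) := by
    funext T x₀
    simp only [ContinuousMap.add_apply, Pi.add_apply]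
    rw [intervalIntegral.integral_add (cmap_intervalIntegrable ω g x₀ T) (cmap_intervalIntegrable ω h x₀ T),
      mul_add]
  have h2 : (fun (_ : Fin n → AddCircle (1:ℝ)) => ∫ x, (g + h) x) =
      (fun (_ : Fin n → AddCircle (1:ℝ)) => ∫ x, g x) + fun _ => ∫ x, h x := by
    funext y
    simp only [ContinuousMap.add_apply, Pi.add_apply]
    exact integral_add (cmap_integrable g) (cmap_integrable h)
  have key := hg.add hh
  convert key using 1

lemma unifAvg_smul (ω : Fin n → ℝ) (c : ℂ) {g : C((Fin n → AddCircle (1:ℝ)), ℂ)}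
    (hg : UnifAvg ω g) : UnifAvg ω (c • g) := by
  rcases eq_or_ne c 0 with rfl | hc
  · have h0 : (0:ℂ) • g = 0 := zero_smul ℂ g
    rw [h0]; exact unifAvg_zero ω
  unfold UnifAvg at *
  rw [Metric.tendstoUniformly_iff] at hg ⊢
  intro ε hε
  have hc' : 0 < ‖c‖ := norm_pos_iff.2 hc
  filter_upwards [hg (ε / ‖c‖) (by positivity)] with T hT x₀
  have e1 : (1 / (T:ℂ)) * ∫ t in (0:ℝ)..T, (c • g) (flow ω x₀ t)
      = c * ((1 / (T:ℂ)) * ∫ t in (0:ℝ)..T, g (flow ω x₀ t)) := by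
    simp only [ContinuousMap.smul_apply, smul_eq_mul]
    rw [intervalIntegral.integral_const_mul]
    ring
  have e2 : (∫ x, (c • g) x) = c * ∫ x, g x := by
    simp only [ContinuousMap.smul_apply, smul_eq_mul]
    rw [integral_const_mul]
  rw [e1, e2, dist_eq_norm, ← mul_sub, norm_mul, ← dist_eq_norm]
  calc ‖c‖ * dist (∫ x, g x) ((1 / (T:ℂ)) * ∫ t in (0:ℝ)..T, g (flow ω x₀ t))
      < ‖c‖ * (ε / ‖c‖) := by exact (mul_lt_mul_iff_right₀ hc').2 (hT x₀)
    _ = ε := by rw [mul_comm, div_mul_cancel₀ _ (ne_of_gt hc')]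

lemma tchar_norm {n : ℕ} (s : Fin n → ℤ) (x : Fin n → AddCircle (1:ℝ)) :
    ‖tchar s x‖ = 1 := by
  rw [tchar_apply, norm_prod]
  simp [Circle.norm_coe]

lemma unifAvg_tchar {n : ℕ} (ω : Fin n → ℝ)
    (hω : ∀ s : Fin n → ℤ, s ≠ 0 → (∑ i, (s i : ℝ) * ω i) ≠ 0)
    (s : Fin n → ℤ) : UnifAvg ω (tchar s) := by
  rcases eq_or_ne s 0 with rfl | hs
  · unfold UnifAvg
    rw [Metric.tendstoUniformly_iff]
    intro ε hε
    filter_upwards [eventually_ge_atTop (1:ℝ)] with T hT x₀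
    have hT0 : (T:ℝ) ≠ 0 := by linarith
    rw [tchar_zero]
    simp only [ContinuousMap.one_apply]
    rw [intervalIntegral.integral_const, integral_const]
    simp only [measure_univ, probReal_univ, Complex.ofReal_one, ENNReal.toReal_one, one_smul, sub_zero, smul_eq_mul, mul_one,
      Complex.real_smul]
    have h1 : (1 / (T:ℂ)) * (T:ℂ) = 1 := by
      rw [one_div, inv_mul_cancel₀ (by exact_mod_cast hT0)]
    rw [h1, dist_self]
    exact hε
  · have hc : (∑ i, (s i : ℝ) * ω i) ≠ 0 := hω s hs
    set a : ℂ := 2 * Real.pi * I * (∑ i, (s i : ℝ) * ω i) with ha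
    have ha0 : a ≠ 0 := by
      rw [ha]
      refine mul_ne_zero (mul_ne_zero (mul_ne_zero ?_ ?_) I_ne_zero) ?_
      · norm_num
      · exact_mod_cast Real.pi_ne_zero
      · exact_mod_cast hc
    have hnorm : 0 < ‖a‖ := norm_pos_iff.2 ha0
    unfold UnifAvg
    rw [Metric.tendstoUniformly_iff]
    intro ε hε
    filter_upwards [eventually_ge_atTop (max 1 (2 / (‖a‖ * ε) + 1))] with T hT x₀
    have hT1 : (1:ℝ) ≤ T := le_trans (le_max_left _ _) hT
    have hT0 : (0:ℝ) < T := lt_of_lt_of_le zero_lt_one hT1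
    have havg : (1 / (T:ℂ)) * ∫ t in (0:ℝ)..T, tchar s (flow ω x₀ t)
        = (1/(T:ℂ)) * (tchar s x₀ * ((Complex.exp (a * T) - 1)/a)) := by
      congr 1
      have hfl : (fun t : ℝ => tchar s (flow ω x₀ t))
          = fun t : ℝ => tchar s x₀ * Complex.exp (a * t) := by
        funext t
        exact tchar_flow s ω x₀ t
      rw [hfl, intervalIntegral.integral_const_mul]
      congr 1
      simpa using integral_exp_mul_complex ha0 (a := 0) (b := T)
    rw [integral_tchar_eq_zero hs, havg, dist_zero_left]
    have hexp : ‖Complex.exp (a * T)‖ = 1 := by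
      rw [Complex.norm_exp]
      have hre : (a * T).re = 0 := by
        rw [ha]; simp [Complex.mul_re]
      rw [hre, Real.exp_zero]
    have hnum : ‖Complex.exp (a * T) - 1‖ ≤ 2 := by
      calc ‖Complex.exp (a * T) - 1‖ ≤ ‖Complex.exp (a * T)‖ + ‖(1:ℂ)‖ := norm_sub_le _ _
        _ = 2 := by rw [hexp, norm_one]; norm_num
    have hb : ‖(1/(T:ℂ)) * (tchar s x₀ * ((Complex.exp (a * T) - 1)/a))‖ ≤ 2/(T*‖a‖) := by
      rw [norm_mul, norm_mul, tchar_norm, one_mul, norm_div, norm_div, norm_one,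
        Complex.norm_real, Real.norm_eq_abs, abs_of_pos hT0]
      calc (1/T) * (‖Complex.exp (a * T) - 1‖ / ‖a‖) ≤ (1/T) * (2/‖a‖) := by
            gcongr
        _ = 2/(T*‖a‖) := by rw [div_mul_div_comm, one_mul]
    refine lt_of_le_of_lt hb ?_
    have hT2 : 2/(‖a‖*ε) < T :=
      lt_of_lt_of_le (lt_add_of_pos_right _ one_pos) (le_trans (le_max_right _ _) hT)
    have h2 : 2 < T * (‖a‖ * ε) := (div_lt_iff₀ (by positivity)).1 hT2
    rw [div_lt_iff₀ (by positivity)]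
    nlinarith [h2]

end WeylAux

/-- Weyl's equidistribution theorem for the linear (Kronecker) flow on the torus: for a
non-resonant frequency vector `ω` and continuous `f`, the time averages
`(1/T)∫₀^T f(x₀ + ωt) dt` converge, uniformly in `x₀`, to the space average of `f`. -/
theorem weyl_equidistribution_uniform (n : ℕ) (ω : Fin n → ℝ)
    (hω : ∀ s : Fin n → ℤ, s ≠ 0 → (∑ i, (s i : ℝ) * ω i) ≠ 0)
    (f : (Fin n → AddCircle (1:ℝ)) → ℝ) (hf : Continuous f) :
    TendstoUniformly
      (fun (T : ℝ) (x₀ : Fin n → AddCircle (1:ℝ)) =>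
        (1 / T) * ∫ t in (0:ℝ)..T, f (fun i => x₀ i + ((ω i * t : ℝ) : AddCircle (1:ℝ))))
      (fun _ => ∫ x, f x) atTop := by
  classical
  set F : C((Fin n → AddCircle (1:ℝ)), ℂ) := ⟨fun x => (f x : ℂ), by fun_prop⟩ with hFdef
  rw [Metric.tendstoUniformly_iff]
  intro ε hε
  -- choose a trigonometric polynomial `P` close to `F`
  have hFmem : F ∈ closure ((Submodule.span ℂ (Set.range (tchar (n := n)))) : Set _) := by
    have := span_tchar_closure_eq_top n
    have : F ∈ (Submodule.span ℂ (Set.range (tchar (n := n)))).topologicalClosure := by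
      rw [this]; trivial
    exact this
  obtain ⟨P, hPmem, hPdist⟩ := Metric.mem_closure_iff.1 hFmem (ε/4) (by positivity)
  have hPmem' : P ∈ Submodule.span ℂ (Set.range (tchar (n := n))) := hPmem
  have hPavg : UnifAvg ω P := by
    refine Submodule.span_induction ?_ ?_ ?_ ?_ hPmem'
    · rintro - ⟨s, rfl⟩
      exact unifAvg_tchar ω hω s
    · exact unifAvg_zero ω
    · intro x y _ _ hx hy; exact unifAvg_add ω hx hy
    · intro c x _ hx; exact unifAvg_smul ω c hx
  have hFP : ‖F - P‖ < ε/4 := by rwa [← dist_eq_norm]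
  -- UnifAvg gives the eventual bound for P
  have hPev := Metric.tendstoUniformly_iff.1 hPavg (ε/4) (by positivity)
  filter_upwards [hPev, eventually_ge_atTop (1:ℝ)] with T hTP hT1 x₀
  have hT0 : (0:ℝ) < T := lt_of_lt_of_le zero_lt_one hT1
  -- identify the real average with the complex average of `F`
  have hreal : ((( 1 / T) * ∫ t in (0:ℝ)..T, f (flow ω x₀ t) : ℝ) : ℂ)
      = (1/(T:ℂ)) * ∫ t in (0:ℝ)..T, F (flow ω x₀ t) := by
    have : (fun t : ℝ => F (flow ω x₀ t)) = fun t : ℝ => ((f (flow ω x₀ t) : ℝ) : ℂ) := rfl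
    rw [this, intervalIntegral.integral_ofReal]
    push_cast
    ring
  have hint : (∫ x, F x) = ((∫ x, f x : ℝ) : ℂ) := by
    have h0 : (fun x => F x) = fun x => ((f x : ℝ) : ℂ) := rfl
    rw [h0]
    exact integral_ofReal
  -- main estimate
  have key : dist ((∫ x, f x : ℝ)) ((1 / T) * ∫ t in (0:ℝ)..T, f (flow ω x₀ t)) < ε := by
    rw [← Complex.isometry_ofReal.dist_eq, hreal, ← hint]
    have tri := dist_triangle4 (∫ x, F x) (∫ x, P x)
      ((1/(T:ℂ)) * ∫ t in (0:ℝ)..T, P (flow ω x₀ t))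
      ((1/(T:ℂ)) * ∫ t in (0:ℝ)..T, F (flow ω x₀ t))
    have h1 : dist (∫ x, F x) (∫ x, P x) ≤ ε/4 := by
      rw [dist_eq_norm, ← integral_sub (cmap_integrable F) (cmap_integrable P)]
      have hbound : ∀ x : Fin n → AddCircle (1:ℝ), ‖F x - P x‖ ≤ ‖F - P‖ := by
        intro x
        calc ‖F x - P x‖ = ‖(F - P) x‖ := by rw [ContinuousMap.sub_apply]
          _ ≤ ‖F - P‖ := (F - P).norm_coe_le_norm x
      calc ‖∫ x, (F x - P x)‖ ≤ ‖F - P‖ * (volume Set.univ).toReal :=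
            norm_integral_le_of_norm_le_const (Filter.Eventually.of_forall hbound)
        _ = ‖F - P‖ := by rw [measure_univ, ENNReal.toReal_one, mul_one]
        _ ≤ ε/4 := le_of_lt hFP
    have h2 : dist (∫ x, P x) ((1/(T:ℂ)) * ∫ t in (0:ℝ)..T, P (flow ω x₀ t)) < ε/4 := hTP x₀
    have h3 : dist ((1/(T:ℂ)) * ∫ t in (0:ℝ)..T, P (flow ω x₀ t))
        ((1/(T:ℂ)) * ∫ t in (0:ℝ)..T, F (flow ω x₀ t)) ≤ ε/4 := by
      rw [dist_eq_norm, ← mul_sub,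
        ← intervalIntegral.integral_sub (cmap_intervalIntegrable ω P x₀ T)
          (cmap_intervalIntegrable ω F x₀ T)]
      have hbound : ∀ t ∈ Set.uIoc (0:ℝ) T, ‖P (flow ω x₀ t) - F (flow ω x₀ t)‖ ≤ ‖F - P‖ := by
        intro t _
        calc ‖P (flow ω x₀ t) - F (flow ω x₀ t)‖ = ‖(F - P) (flow ω x₀ t)‖ := by
              rw [ContinuousMap.sub_apply, norm_sub_rev]
          _ ≤ ‖F - P‖ := (F - P).norm_coe_le_norm _
      have hIntBound := intervalIntegral.norm_integral_le_of_norm_le_const hbound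
      calc ‖(1/(T:ℂ)) * ∫ t in (0:ℝ)..T, (P (flow ω x₀ t) - F (flow ω x₀ t))‖
          = (1/T) * ‖∫ t in (0:ℝ)..T, (P (flow ω x₀ t) - F (flow ω x₀ t))‖ := by
            rw [norm_mul, norm_div, norm_one, Complex.norm_real, Real.norm_eq_abs,
              abs_of_pos hT0]
        _ ≤ (1/T) * (‖F - P‖ * |T - 0|) := by gcongr
        _ = ‖F - P‖ := by rw [sub_zero, abs_of_pos hT0]; field_simp
        _ ≤ ε/4 := le_of_lt hFP
    calc dist (∫ x, F x) ((1/(T:ℂ)) * ∫ t in (0:ℝ)..T, F (flow ω x₀ t))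
        ≤ dist (∫ x, F x) (∫ x, P x)
          + dist (∫ x, P x) ((1/(T:ℂ)) * ∫ t in (0:ℝ)..T, P (flow ω x₀ t))
          + dist ((1/(T:ℂ)) * ∫ t in (0:ℝ)..T, P (flow ω x₀ t))
            ((1/(T:ℂ)) * ∫ t in (0:ℝ)..T, F (flow ω x₀ t)) := tri
      _ < ε/4 + ε/4 + ε/4 := by
          have := h2
          linarith [h1, h2, h3]
      _ < ε := by linarith
  exact key
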